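/- Let U be a binary random variable and W a random variable taking finitely many values w with probabilities P(w). For each w let b(w) ∈ {0,1} be chosen so that P(U = b(w) | w) ≤ 1/2. If Σ_w P(w) (1/2 − P(U = b(w) | w)) = a with a > 0, then the conditional entropy satisfies H(U | W) ≤ H(1/2 − a), where H is the binary entropy function. In particular H(U | W) is bounded away from 1 by a quantity depending only on a. -/

import Mathlib

/-- The binary entropy function in bits. -/
noncomputable def binEnt2 (p : ℝ) : ℝ :=
  -(p * Real.logb 2 p) - (1 - p) * Real.logb 2 (1 - p)

lemma binEnt2_eq (p : ℝ) : binEnt2 p = (Real.log 2)⁻¹ * Real.binEntropy p := by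
  simp [binEnt2, Real.binEntropy, Real.logb, div_eq_inv_mul]
  ring

lemma binEnt2_one_sub (p : ℝ) : binEnt2 (1 - p) = binEnt2 p := by
  simp [binEnt2_eq, Real.binEntropy_one_sub]

lemma concaveOn_binEnt2 : ConcaveOn ℝ (Set.Icc 0 1) binEnt2 := by
  have h := Real.strictConcave_binEntropy.concaveOn.smul
    (c := (Real.log 2)⁻¹) (by positivity)
  have hf : binEnt2 = fun x => (Real.log 2)⁻¹ • Real.binEntropy x := by
    ext p
    simp [binEnt2_eq]
  rw [hf]; exact h

/-- If on average the conditional distribution of a binary `U` given `W` is biased away from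
uniform by `a > 0` (i.e. `Σ_w P(w)(1/2 − P(U = b(w)|w)) = a` where `b(w)` picks the less likely
value), then the conditional entropy `H(U|W) = Σ_w P(w) H(P(U=0|w))` is at most `H(1/2 − a)`. -/
theorem condEntropy_le_of_avg_bias
    (W : Type) [Fintype W]
    (P : W → ℝ) (hP : ∀ w, 0 ≤ P w) (hPsum : ∑ w, P w = 1)
    (q : W → ℝ) (hq : ∀ w, q w ∈ Set.Icc (0 : ℝ) 1)  -- q w = P(U = 0 | W = w)
    (a : ℝ) (ha : 0 < a)
    (hbias : ∑ w, P w * (1 / 2 - (if q w < 1 / 2 then q w else 1 - q w)) = a) :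
    ∑ w, P w * binEnt2 (q w) ≤ binEnt2 (1 / 2 - a) := by
  set m : W → ℝ := fun w => if q w < 1 / 2 then q w else 1 - q w with hm
  have hmem : ∀ w ∈ Finset.univ, m w ∈ Set.Icc (0 : ℝ) 1 := by
    intro w _
    have := hq w
    simp only [hm]
    split <;> constructor <;> (simp [Set.mem_Icc] at this; linarith [this.1, this.2])
  have hsum_m : ∑ w, P w * m w = 1 / 2 - a := by
    have : ∑ w, P w * (1 / 2 - m w) = ∑ w, (P w * (1/2) - P w * m w) := by
      apply Finset.sum_congr rfl; intro w _; ring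
    rw [this, Finset.sum_sub_distrib, ← Finset.sum_mul, hPsum] at hbias
    linarith
  have hEq : ∀ w, binEnt2 (q w) = binEnt2 (m w) := by
    intro w
    simp only [hm]
    split
    · rfl
    · exact (binEnt2_one_sub (q w)).symm
  calc ∑ w, P w * binEnt2 (q w) = ∑ w, P w • binEnt2 (m w) := by
        apply Finset.sum_congr rfl; intro w _; rw [hEq w]; rfl
    _ ≤ binEnt2 (∑ w, P w • m w) :=
        concaveOn_binEnt2.le_map_sum (fun w _ => hP w) hPsum hmem
    _ = binEnt2 (1 / 2 - a) := by rw [show (∑ w, P w • m w) = ∑ w, P w * m w from rfl, hsum_m]
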